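/- arXiv:2207.03263 — 2 statements merged into one kernel-verified Lean document; each statement's English description precedes it below -/
import Mathlib

section
/- The function H_k(q₁,…,q_k) = 2∑_{i≠j} log|q_i−q_j| − (1/r₀²)∑_{j=1}^k (q_j¹)² is a Hamiltonian for the leapfrogging system dq_j/dτ = −4∑_{ℓ≠j}(q_j−q_ℓ)^⊥/|q_j−q_ℓ|² + 2(q_j¹/r₀²)e₂: namely, along any solution with q_i(τ) ≠ q_j(τ) for i ≠ j, the quantity H_k(q₁(τ),…,q_k(τ)) is constant in τ. -/
/-- `(a,b)^⊥ = (−b,a)`. -/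
def perp (p : ℝ × ℝ) : ℝ × ℝ := (-p.2, p.1)

/-- The squared Euclidean norm on `ℝ²`. -/
def enorm2 (p : ℝ × ℝ) : ℝ := p.1 ^ 2 + p.2 ^ 2

/-- The leapfrogging Hamiltonian
`H_k(q₁,…,q_k) = 2∑_{i≠j} log|q_i−q_j| − (1/r₀²)∑_j (q_j¹)²`. -/
noncomputable def Hk (k : ℕ) (r₀ : ℝ) (q : Fin k → ℝ × ℝ) : ℝ :=
  2 * ∑ i : Fin k, ∑ j ∈ Finset.univ.erase i, Real.log (Real.sqrt (enorm2 (q i - q j)))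
    - (1 / r₀ ^ 2) * ∑ j : Fin k, (q j).1 ^ 2

lemma enorm2_nonneg (p : ℝ × ℝ) : 0 ≤ enorm2 p := by unfold enorm2; positivity

lemma enorm2_pos {x : ℝ × ℝ} (h : x ≠ 0) : 0 < enorm2 x := by
  rcases eq_or_ne x.1 0 with h1 | h1
  · have h2 : x.2 ≠ 0 := by
      intro h2; exact h (Prod.ext h1 h2)
    have : 0 < x.2 ^ 2 := by positivity
    unfold enorm2; nlinarith [sq_nonneg x.1]
  · have : 0 < x.1 ^ 2 := by positivity
    unfold enorm2; nlinarith [sq_nonneg x.2]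

lemma enorm2_sub_comm (a b : ℝ × ℝ) : enorm2 (a - b) = enorm2 (b - a) := by
  simp only [enorm2, Prod.fst_sub, Prod.snd_sub]; ring

lemma sum_erase_swap {k : ℕ} (f : Fin k → Fin k → ℝ) :
    ∑ i : Fin k, ∑ j ∈ Finset.univ.erase i, f i j
      = ∑ i : Fin k, ∑ j ∈ Finset.univ.erase i, f j i := by
  refine Finset.sum_comm' ?_
  intro x y
  simp [ne_comm, and_comm]

lemma Hk_eq (k : ℕ) (r₀ : ℝ) (Q : Fin k → ℝ × ℝ) :
    Hk k r₀ Q = (∑ i : Fin k, ∑ j ∈ Finset.univ.erase i, Real.log (enorm2 (Q i - Q j)))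
      - (1 / r₀ ^ 2) * ∑ j : Fin k, (Q j).1 ^ 2 := by
  unfold Hk
  congr 1
  rw [Finset.mul_sum]
  refine Finset.sum_congr rfl fun i _ => ?_
  rw [Finset.mul_sum]
  refine Finset.sum_congr rfl fun j _ => ?_
  rw [Real.log_sqrt (enorm2_nonneg _)]
  ring

/-- The core algebraic identity: the candidate derivative of `H_k` along the flow vanishes. -/
lemma leapfrog_alg (k : ℕ) (r₀ : ℝ) (p v : Fin k → ℝ × ℝ)
    (hv : ∀ j : Fin k, v j = (-4 : ℝ) • (∑ l ∈ Finset.univ.erase j,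
        (enorm2 (p j - p l))⁻¹ • perp (p j - p l)) + (2 * (p j).1 / r₀ ^ 2) • ((0:ℝ), (1:ℝ))) :
    (∑ i : Fin k, ∑ j ∈ Finset.univ.erase i, (enorm2 (p i - p j))⁻¹ *
        (2 * ((p i - p j).1 * (v i - v j).1) + 2 * ((p i - p j).2 * (v i - v j).2)))
      - (1 / r₀ ^ 2) * ∑ j : Fin k, (2 * (p j).1 * (v j).1) = 0 := by
  classical
  set E : Fin k → Fin k → ℝ := fun i j => (enorm2 (p i - p j))⁻¹ with hE
  set X : Fin k → ℝ := fun i => ∑ l ∈ Finset.univ.erase i, E i l * (p i - p l).1 with hX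
  set Y : Fin k → ℝ := fun i => ∑ l ∈ Finset.univ.erase i, E i l * (p i - p l).2 with hY
  have hv1 : ∀ i : Fin k, (v i).1 = 4 * Y i := by
    intro i
    rw [hv i]
    simp only [Prod.fst_add, Prod.smul_fst, smul_eq_mul, Prod.fst_sum, perp, mul_zero, add_zero,
      mul_neg, Finset.sum_neg_distrib, Finset.mul_sum, hY, hE]
    rw [← Finset.sum_neg_distrib]
    exact Finset.sum_congr rfl fun l _ => by ring
  have hv2 : ∀ i : Fin k, (v i).2 = -4 * X i + 2 * (p i).1 / r₀ ^ 2 := by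
    intro i
    rw [hv i]
    simp only [Prod.snd_add, Prod.smul_snd, smul_eq_mul, Prod.snd_sum, perp, mul_one,
      Finset.mul_sum, hX, hE]
  -- notation for the three double sums
  have inner : ∀ i : Fin k, (∑ j ∈ Finset.univ.erase i,
      E i j * (2 * ((p i - p j).1 * (v i).1) + 2 * ((p i - p j).2 * (v i).2)))
      = (4 * (p i).1 / r₀ ^ 2) * Y i := by
    intro i
    have step : ∀ j ∈ Finset.univ.erase i,
        E i j * (2 * ((p i - p j).1 * (v i).1) + 2 * ((p i - p j).2 * (v i).2))
        = (8 * Y i) * (E i j * (p i - p j).1)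
          + (-(8 * X i) + 4 * (p i).1 / r₀ ^ 2) * (E i j * (p i - p j).2) := by
      intro j _
      rw [hv1 i, hv2 i]
      ring
    rw [Finset.sum_congr rfl step, Finset.sum_add_distrib, ← Finset.mul_sum, ← Finset.mul_sum,
      show (∑ j ∈ Finset.univ.erase i, E i j * (p i - p j).1) = X i from rfl,
      show (∑ j ∈ Finset.univ.erase i, E i j * (p i - p j).2) = Y i from rfl]
    ring
  have swap2 : (∑ i : Fin k, ∑ j ∈ Finset.univ.erase i,
      E i j * (2 * ((p i - p j).1 * (v j).1) + 2 * ((p i - p j).2 * (v j).2)))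
      = - ∑ i : Fin k, ∑ j ∈ Finset.univ.erase i,
        E i j * (2 * ((p i - p j).1 * (v i).1) + 2 * ((p i - p j).2 * (v i).2)) := by
    rw [sum_erase_swap (fun i j => E i j * (2 * ((p i - p j).1 * (v j).1)
      + 2 * ((p i - p j).2 * (v j).2))), ← Finset.sum_neg_distrib]
    refine Finset.sum_congr rfl fun i _ => ?_
    rw [← Finset.sum_neg_distrib]
    refine Finset.sum_congr rfl fun j _ => ?_
    have h1 : (p j - p i).1 = -((p i - p j).1) := by
      simp only [Prod.fst_sub]; ring
    have h2 : (p j - p i).2 = -((p i - p j).2) := by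
      simp only [Prod.snd_sub]; ring
    have hEc : E j i = E i j := by simp only [hE, enorm2_sub_comm]
    rw [h1, h2, hEc]
    ring
  have expand : (∑ i : Fin k, ∑ j ∈ Finset.univ.erase i, E i j *
        (2 * ((p i - p j).1 * (v i - v j).1) + 2 * ((p i - p j).2 * (v i - v j).2)))
      = (∑ i : Fin k, ∑ j ∈ Finset.univ.erase i,
          E i j * (2 * ((p i - p j).1 * (v i).1) + 2 * ((p i - p j).2 * (v i).2)))
        - (∑ i : Fin k, ∑ j ∈ Finset.univ.erase i,
          E i j * (2 * ((p i - p j).1 * (v j).1) + 2 * ((p i - p j).2 * (v j).2))) := by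
    rw [← Finset.sum_sub_distrib]
    refine Finset.sum_congr rfl fun i _ => ?_
    rw [← Finset.sum_sub_distrib]
    refine Finset.sum_congr rfl fun j _ => ?_
    simp only [Prod.fst_sub, Prod.snd_sub]
    ring
  rw [expand, swap2]
  have hA : (∑ i : Fin k, ∑ j ∈ Finset.univ.erase i,
      E i j * (2 * ((p i - p j).1 * (v i).1) + 2 * ((p i - p j).2 * (v i).2)))
      = ∑ i : Fin k, (4 * (p i).1 / r₀ ^ 2) * Y i :=
    Finset.sum_congr rfl fun i _ => inner i
  have hlast : (∑ j : Fin k, (2 * (p j).1 * (v j).1)) = ∑ j : Fin k, 2 * (p j).1 * (4 * Y j) :=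
    Finset.sum_congr rfl fun j _ => by rw [hv1 j]
  rw [hA, hlast, Finset.mul_sum, sub_neg_eq_add, ← Finset.sum_add_distrib,
    ← Finset.sum_sub_distrib]
  refine Finset.sum_eq_zero fun j _ => ?_
  ring

private lemma hasDerivAt_fst' {f : ℝ → ℝ × ℝ} {w : ℝ × ℝ} {t : ℝ} (h : HasDerivAt f w t) :
    HasDerivAt (fun s => (f s).1) w.1 t := by
  exact hasFDerivAt_fst.comp_hasDerivAt t h

private lemma hasDerivAt_snd' {f : ℝ → ℝ × ℝ} {w : ℝ × ℝ} {t : ℝ} (h : HasDerivAt f w t) :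
    HasDerivAt (fun s => (f s).2) w.2 t := by
  exact hasFDerivAt_snd.comp_hasDerivAt t h

/-- `H_k` is conserved along collisionless solutions of the leapfrogging system
`dq_j/dτ = −4∑_{ℓ≠j}(q_j−q_ℓ)^⊥/|q_j−q_ℓ|² + 2(q_j¹/r₀²)e₂` on `[0,T]`. -/
theorem leapfrogging_hamiltonian_conserved (k : ℕ) (hk : 2 ≤ k) (r₀ T : ℝ)
    (hr₀ : 0 < r₀) (hT : 0 < T) (q : Fin k → ℝ → ℝ × ℝ)
    (hode : ∀ j : Fin k, ∀ τ ∈ Set.Icc (0 : ℝ) T,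
      HasDerivAt (q j)
        ((-4 : ℝ) • (∑ l ∈ Finset.univ.erase j,
            (enorm2 (q j τ - q l τ))⁻¹ • perp (q j τ - q l τ))
          + (2 * (q j τ).1 / r₀ ^ 2) • ((0 : ℝ), (1 : ℝ))) τ)
    (hsep : ∀ τ ∈ Set.Icc (0 : ℝ) T, ∀ i j : Fin k, i ≠ j → q i τ ≠ q j τ) :
    ∀ τ ∈ Set.Icc (0 : ℝ) T, Hk k r₀ (fun j => q j τ) = Hk k r₀ (fun j => q j 0) := by
  set F : ℝ → ℝ := fun t => Hk k r₀ (fun j => q j t) with hF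
  have key : ∀ τ ∈ Set.Icc (0 : ℝ) T, HasDerivAt F 0 τ := by
    intro τ hτ
    set p : Fin k → ℝ × ℝ := fun j => q j τ with hp
    set v : Fin k → ℝ × ℝ := fun j =>
      (-4 : ℝ) • (∑ l ∈ Finset.univ.erase j, (enorm2 (p j - p l))⁻¹ • perp (p j - p l))
        + (2 * (p j).1 / r₀ ^ 2) • ((0 : ℝ), (1 : ℝ)) with hvdef
    have hqd : ∀ j, HasDerivAt (q j) (v j) τ := fun j => hode j τ hτ
    have hne : ∀ i : Fin k, ∀ j ∈ Finset.univ.erase i, enorm2 (p i - p j) ≠ 0 := by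
      intro i j hj
      have hij : j ≠ i := (Finset.mem_erase.mp hj).1
      have hnz : p i - p j ≠ 0 := sub_ne_zero.mpr (hsep τ hτ i j hij.symm)
      exact (enorm2_pos hnz).ne'
    have hlog : ∀ i : Fin k, ∀ j ∈ Finset.univ.erase i,
        HasDerivAt (fun t => Real.log (enorm2 (q i t - q j t)))
          ((enorm2 (p i - p j))⁻¹ *
            (2 * ((p i - p j).1 * (v i - v j).1) + 2 * ((p i - p j).2 * (v i - v j).2))) τ := by
      intro i j hj
      have hd : HasDerivAt (fun t => q i t - q j t) (v i - v j) τ := (hqd i).sub (hqd j)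
      have h1 : HasDerivAt (fun t => (q i t - q j t).1) ((v i - v j).1) τ := hasDerivAt_fst' hd
      have h2 : HasDerivAt (fun t => (q i t - q j t).2) ((v i - v j).2) τ := hasDerivAt_snd' hd
      have he : HasDerivAt (fun t => enorm2 (q i t - q j t))
          (2 * ((p i - p j).1 * (v i - v j).1) + 2 * ((p i - p j).2 * (v i - v j).2)) τ := by
        have h' := (h1.fun_pow 2).add (h2.fun_pow 2)
        show HasDerivAt (fun t => ((q i t - q j t).1) ^ 2 + ((q i t - q j t).2) ^ 2) _ τ
        refine h'.congr_deriv ?_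
        push_cast
        ring
      exact (Real.hasDerivAt_log (hne i j hj)).comp τ he
    have hsq : ∀ j : Fin k, HasDerivAt (fun t => ((q j t).1) ^ 2) (2 * (p j).1 * (v j).1) τ := by
      intro j
      have h1 : HasDerivAt (fun t => (q j t).1) ((v j).1) τ := hasDerivAt_fst' (hqd j)
      have h' := h1.fun_pow 2
      refine h'.congr_deriv ?_
      push_cast
      ring
    have hD : HasDerivAt F
        ((∑ i : Fin k, ∑ j ∈ Finset.univ.erase i, (enorm2 (p i - p j))⁻¹ *
            (2 * ((p i - p j).1 * (v i - v j).1) + 2 * ((p i - p j).2 * (v i - v j).2)))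
          - (1 / r₀ ^ 2) * ∑ j : Fin k, (2 * (p j).1 * (v j).1)) τ := by
      have hF' : F = fun t => (∑ i : Fin k, ∑ j ∈ Finset.univ.erase i,
          Real.log (enorm2 (q i t - q j t)))
          - (1 / r₀ ^ 2) * ∑ j : Fin k, ((q j t).1) ^ 2 :=
        funext fun t => Hk_eq k r₀ (fun j => q j t)
      rw [hF']
      exact (HasDerivAt.fun_sum fun i _ => HasDerivAt.fun_sum fun j hj => hlog i j hj).sub
        ((HasDerivAt.fun_sum fun j _ => hsq j).const_mul (1 / r₀ ^ 2))
    have hzero := leapfrog_alg k r₀ p v (fun j => rfl)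
    rw [hzero] at hD
    exact hD
  have hcont : ContinuousOn F (Set.Icc 0 T) :=
    fun t ht => (key t ht).continuousAt.continuousWithinAt
  have hconst := constant_of_has_deriv_right_zero hcont
    (fun t ht => (key t (Set.mem_Icc_of_Ico ht)).hasDerivWithinAt)
  intro τ hτ
  exact hconst τ hτ
end

section
/- For k = 2 with the symmetric ansatz q₁ = −q₂ = q, the reduced system dq/dτ = −2q^⊥/|q|² + 2(q¹/r₀²)e₂ conserves the quantity H(q) = 2log(2|q|) − (q¹)²/r₀²: along any solution with q(τ) ≠ 0, d/dτ [2 log|q(τ)| − (q¹(τ))²/r₀²] = 0. -/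
/-- For `k = 2` with the symmetric ansatz `q₁ = −q₂ = q`, the reduced system
`dq/dτ = −2q^⊥/|q|² + 2(q¹/r₀²)e₂` conserves `2log|q| − (q¹)²/r₀²`: along any
solution with `q(τ) ≠ 0`, `d/dτ [2log|q(τ)| − (q¹(τ))²/r₀²] = 0`. -/
theorem symmetric_pair_conserved (r₀ : ℝ) (hr₀ : 0 < r₀) (q : ℝ → ℝ × ℝ)
    (hq : ∀ τ, q τ ≠ 0)
    (hode : ∀ τ, HasDerivAt q
      ((-2 / enorm2 (q τ)) • perp (q τ) + (2 * (q τ).1 / r₀ ^ 2) • ((0 : ℝ), (1 : ℝ))) τ) :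
    ∀ τ, HasDerivAt
      (fun t => 2 * Real.log (Real.sqrt (enorm2 (q t))) - (q t).1 ^ 2 / r₀ ^ 2) 0 τ := by
  have hs : ∀ t, 0 < enorm2 (q t) := by
    intro t
    have h := hq t
    have h1 : (q t).1 ≠ 0 ∨ (q t).2 ≠ 0 := by
      by_contra hc
      push_neg at hc
      exact h (Prod.ext hc.1 hc.2)
    unfold enorm2
    rcases h1 with h1 | h1
    · nlinarith [sq_nonneg (q t).2, sq_pos_of_ne_zero h1]
    · nlinarith [sq_nonneg (q t).1, sq_pos_of_ne_zero h1]
  have heq : (fun t => 2 * Real.log (Real.sqrt (enorm2 (q t))) - (q t).1 ^ 2 / r₀ ^ 2)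
      = fun t => Real.log (enorm2 (q t)) - (q t).1 ^ 2 / r₀ ^ 2 := by
    funext t
    rw [Real.log_sqrt (hs t).le]
    ring
  rw [heq]
  intro τ
  have hspos : 0 < enorm2 (q τ) := hs τ
  have hx : HasDerivAt (fun t => (q t).1) (2 * (q τ).2 / enorm2 (q τ)) τ := by
    have h := (hode τ).fst
    have he : ((-2 / enorm2 (q τ)) • perp (q τ)
        + (2 * (q τ).1 / r₀ ^ 2) • ((0 : ℝ), (1 : ℝ))).1 = 2 * (q τ).2 / enorm2 (q τ) := by
      simp [perp]
      ring
    rw [← he]; exact h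
  have hy : HasDerivAt (fun t => (q t).2)
      (-2 * (q τ).1 / enorm2 (q τ) + 2 * (q τ).1 / r₀ ^ 2) τ := by
    have h := (hode τ).snd
    have he : ((-2 / enorm2 (q τ)) • perp (q τ)
        + (2 * (q τ).1 / r₀ ^ 2) • ((0 : ℝ), (1 : ℝ))).2
        = -2 * (q τ).1 / enorm2 (q τ) + 2 * (q τ).1 / r₀ ^ 2 := by
      simp [perp]
      ring
    rw [← he]; exact h
  have hn : HasDerivAt (fun t => enorm2 (q t))
      (2 * (q τ).1 ^ 1 * (2 * (q τ).2 / enorm2 (q τ))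
        + 2 * (q τ).2 ^ 1 * (-2 * (q τ).1 / enorm2 (q τ) + 2 * (q τ).1 / r₀ ^ 2)) τ := by
    have := (hx.pow 2).add (hy.pow 2)
    simpa [enorm2, Pi.add_def, Pi.pow_def] using this
  have hlog := hn.log hspos.ne'
  have hx2 : HasDerivAt (fun t => (q t).1 ^ 2 / r₀ ^ 2)
      (2 * (q τ).1 ^ 1 * (2 * (q τ).2 / enorm2 (q τ)) / r₀ ^ 2) τ := (hx.pow 2).div_const _
  have h := hlog.sub hx2
  exact h.congr_deriv (by ring)
end
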